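/- With spectral projections π_0, π_1, …, π_p of A as in the context, for every t ∈ ℂ the matrix exponential satisfies exp(tA) = Σ_{i=0}^{t₀−1} (t^i/i!)·A^i·π_0 + Σ_{j=1}^p Σ_{i=0}^{t_j−1} (t^i/i!)·e^{tλ_j}·(A − λ_j I)^i·π_j. -/

import Mathlib

open Polynomial Matrix

lemma exp_mul_proj_aux {q : ℕ} (B P : Matrix (Fin q) (Fin q) ℂ)
    (hc : B * P = P * B) (m : ℕ) (h : B ^ m * P = 0) (τ : ℂ) :
    NormedSpace.exp (τ • B) * P =
      ∑ i ∈ Finset.range m, (τ ^ i / (i.factorial : ℂ)) • (B ^ i * P) := by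
  letI : SeminormedRing (Matrix (Fin q) (Fin q) ℂ) := Matrix.linftyOpSemiNormedRing
  letI : NormedRing (Matrix (Fin q) (Fin q) ℂ) := Matrix.linftyOpNormedRing
  letI : NormedAlgebra ℂ (Matrix (Fin q) (Fin q) ℂ) := Matrix.linftyOpNormedAlgebra
  have hz : ∀ n ∉ Finset.range m,
      (((n.factorial : ℂ)⁻¹ • (τ • B) ^ n) * P) = 0 := by
    intro n hn
    rw [Finset.mem_range, not_lt] at hn
    have hBn : B ^ n * P = 0 := by
      rw [← Nat.sub_add_cancel hn, pow_add, mul_assoc, h, mul_zero]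
    rw [_root_.smul_pow, smul_smul, smul_mul_assoc, hBn, smul_zero]
  have hs : Summable fun n : ℕ => ((n.factorial : ℂ)⁻¹ • (τ • B) ^ n) :=
    NormedSpace.expSeries_summable' (τ • B)
  rw [NormedSpace.exp_eq_tsum ℂ, ← hs.tsum_mul_right P, tsum_eq_sum hz]
  refine Finset.sum_congr rfl fun i _ => ?_
  rw [_root_.smul_pow, smul_smul, smul_mul_assoc, div_eq_mul_inv, mul_comm]

lemma exp_smul_one_aux {q : ℕ} (c : ℂ) :
    NormedSpace.exp (c • (1 : Matrix (Fin q) (Fin q) ℂ)) = Complex.exp c • 1 := by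
  letI : SeminormedRing (Matrix (Fin q) (Fin q) ℂ) := Matrix.linftyOpSemiNormedRing
  letI : NormedRing (Matrix (Fin q) (Fin q) ℂ) := Matrix.linftyOpNormedRing
  letI : NormedAlgebra ℂ (Matrix (Fin q) (Fin q) ℂ) := Matrix.linftyOpNormedAlgebra
  rw [← Algebra.algebraMap_eq_smul_one]
  have := NormedSpace.algebraMap_exp_comm (𝔸 := Matrix (Fin q) (Fin q) ℂ) c
  exact this.symm.trans (by rw [Algebra.algebraMap_eq_smul_one, Complex.exp_eq_exp_ℂ])

/-- Let `A` be a `q × q` complex matrix with minimal polynomial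
`X^{t₀} ∏_j (X − λ_j)^{t_j}` (the `λ_j` distinct and nonzero, `t_j ≥ 1`), and let
`π₀, π₁, …, π_p` be its spectral projections at `0, λ₁, …, λ_p`.  Then for every `t ∈ ℂ`,
`exp(tA) = ∑_{i<t₀} (t^i/i!) A^i π₀ + ∑_j ∑_{i<t_j} (t^i/i!) e^{tλ_j} (A − λ_j I)^i π_j`. -/
theorem exp_smul_eq_spectral (q : ℕ) (hq : 0 < q) (p : ℕ)
    (A : Matrix (Fin q) (Fin q) ℂ)
    (lam : Fin p → ℂ) (hinj : Function.Injective lam) (hne : ∀ j, lam j ≠ 0)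
    (t₀ : ℕ) (t : Fin p → ℕ) (ht : ∀ j, 1 ≤ t j)
    (hmin : minpoly ℂ A = X ^ t₀ * ∏ j, (X - C (lam j)) ^ t j)
    (π₀ : Matrix (Fin q) (Fin q) ℂ) (π : Fin p → Matrix (Fin q) (Fin q) ℂ)
    (hsum : π₀ + ∑ j, π j = 1)
    (horth₁ : ∀ j, π₀ * π j = 0) (horth₂ : ∀ j, π j * π₀ = 0)
    (horth : ∀ j j', j ≠ j' → π j * π j' = 0)
    (hidem₀ : π₀ * π₀ = π₀) (hidem : ∀ j, π j * π j = π j)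
    (hcomm₀ : A * π₀ = π₀ * A) (hcomm : ∀ j, A * π j = π j * A)
    (hnil : A ^ t₀ * π₀ = 0)
    (hjord : ∀ j, (A - lam j • 1) ^ t j * π j = 0) :
    ∀ τ : ℂ, NormedSpace.exp (τ • A) =
      ∑ i ∈ Finset.range t₀, (τ ^ i / (i.factorial : ℂ)) • (A ^ i * π₀) +
      ∑ j, ∑ i ∈ Finset.range (t j),
        ((τ ^ i / (i.factorial : ℂ)) * Complex.exp (τ * lam j)) • ((A - lam j • 1) ^ i * π j) := by
  intro τ
  have h0 : NormedSpace.exp (τ • A) * π₀ =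
      ∑ i ∈ Finset.range t₀, (τ ^ i / (i.factorial : ℂ)) • (A ^ i * π₀) :=
    exp_mul_proj_aux A π₀ hcomm₀ t₀ hnil τ
  have hj : ∀ j, NormedSpace.exp (τ • A) * π j =
      ∑ i ∈ Finset.range (t j),
        ((τ ^ i / (i.factorial : ℂ)) * Complex.exp (τ * lam j)) •
          ((A - lam j • 1) ^ i * π j) := by
    intro j
    have hA : τ • A = (τ * lam j) • (1 : Matrix (Fin q) (Fin q) ℂ)
        + τ • (A - lam j • 1) := by
      rw [smul_sub, smul_smul, add_sub_cancel]
    have hcom : Commute ((τ * lam j) • (1 : Matrix (Fin q) (Fin q) ℂ))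
        (τ • (A - lam j • 1)) :=
      ((Commute.one_left _).smul_left _).smul_right _
    have hc : (A - lam j • 1) * π j = π j * (A - lam j • 1) := by
      rw [sub_mul, mul_sub, hcomm j, smul_mul_assoc, mul_smul_comm, one_mul, mul_one]
    rw [hA, Matrix.exp_add_of_commute _ _ hcom, exp_smul_one_aux, smul_mul_assoc, one_mul,
      smul_mul_assoc, exp_mul_proj_aux _ _ hc _ (hjord j) τ, Finset.smul_sum]
    exact Finset.sum_congr rfl fun i _ => by rw [smul_smul, mul_comm]
  calc NormedSpace.exp (τ • A) = NormedSpace.exp (τ • A) * (π₀ + ∑ j, π j) := by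
        rw [hsum, mul_one]
    _ = NormedSpace.exp (τ • A) * π₀ + ∑ j, NormedSpace.exp (τ • A) * π j := by
        rw [mul_add, Finset.mul_sum]
    _ = _ := by rw [h0]; exact congrArg _ (Finset.sum_congr rfl fun j _ => hj j)
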